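/- arXiv:1511.06736 — 6 statements merged into one kernel-verified Lean document; each statement's English description precedes it below -/
import Mathlib

section
/- The function f(z) = √z − √(z − √z) is strictly decreasing on the interval (1, ∞). -/
theorem stmt_1 :
    StrictAntiOn (fun z : ℝ => Real.sqrt z - Real.sqrt (z - Real.sqrt z)) (Set.Ioi 1) := by
  have key : ∀ x : ℝ, 1 < x → Real.sqrt x - Real.sqrt (x - Real.sqrt x) =
      Real.sqrt x / (Real.sqrt x + Real.sqrt (x - Real.sqrt x)) := by
    intro x hx
    have hx0 : (0:ℝ) < x := by linarith
    have hs : Real.sqrt x < x := (Real.sqrt_lt' hx0).2 (by nlinarith)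
    have h1 : 0 < x - Real.sqrt x := by linarith
    have hsx : 0 < Real.sqrt x := Real.sqrt_pos.2 hx0
    have hs2 : 0 < Real.sqrt (x - Real.sqrt x) := Real.sqrt_pos.2 h1
    have hD : 0 < Real.sqrt x + Real.sqrt (x - Real.sqrt x) := by linarith
    rw [eq_div_iff hD.ne']
    have e1 : Real.sqrt x ^ 2 = x := Real.sq_sqrt hx0.le
    have e2 : Real.sqrt (x - Real.sqrt x) ^ 2 = x - Real.sqrt x := Real.sq_sqrt h1.le
    nlinarith [e1, e2]
  intro a ha b hb hab
  simp only [Set.mem_Ioi] at ha hb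
  have ha0 : (0:ℝ) < a := by linarith
  have hb0 : (0:ℝ) < b := by linarith
  have hsa : Real.sqrt a < a := (Real.sqrt_lt' ha0).2 (by nlinarith)
  have hsb : Real.sqrt b < b := (Real.sqrt_lt' hb0).2 (by nlinarith)
  have h1a : 0 < a - Real.sqrt a := by linarith
  have h1b : 0 < b - Real.sqrt b := by linarith
  have hsa0 : 0 < Real.sqrt a := Real.sqrt_pos.2 ha0
  have hsb0 : 0 < Real.sqrt b := Real.sqrt_pos.2 hb0
  have hsa2 : 0 < Real.sqrt (a - Real.sqrt a) := Real.sqrt_pos.2 h1a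
  have hsb2 : 0 < Real.sqrt (b - Real.sqrt b) := Real.sqrt_pos.2 h1b
  have hDa : 0 < Real.sqrt a + Real.sqrt (a - Real.sqrt a) := by linarith
  have hDb : 0 < Real.sqrt b + Real.sqrt (b - Real.sqrt b) := by linarith
  have hslt : Real.sqrt a < Real.sqrt b := Real.sqrt_lt_sqrt ha0.le hab
  -- key inequality: a * √b < b * √a
  have hkey : a * Real.sqrt b < b * Real.sqrt a := by
    have ea : Real.sqrt a ^ 2 = a := Real.sq_sqrt ha0.le
    have eb : Real.sqrt b ^ 2 = b := Real.sq_sqrt hb0.le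
    nlinarith [mul_pos (mul_pos hsa0 hsb0) (sub_pos.2 hslt)]
  -- hence b * (a - √a) < a * (b - √b)
  have hm : b * (a - Real.sqrt a) < a * (b - Real.sqrt b) := by nlinarith
  have hsqm : Real.sqrt (b * (a - Real.sqrt a)) < Real.sqrt (a * (b - Real.sqrt b)) :=
    Real.sqrt_lt_sqrt (by positivity) hm
  rw [Real.sqrt_mul hb0.le, Real.sqrt_mul ha0.le] at hsqm
  simp only
  rw [key a ha, key b hb, div_lt_div_iff₀ hDb hDa]
  nlinarith [hsqm]
end

section
/- If 4/3 < p ≤ θ, then 2t₀⁻ < p, where t₀⁻ = √z − √(z − √z) with z = pθ(p+1)/(θ+1). -/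
theorem stmt_4 (p θ : ℝ) (hp : 4 / 3 < p) (hpθ : p ≤ θ) :
    2 * (Real.sqrt (p * θ * (p + 1) / (θ + 1)) -
      Real.sqrt (p * θ * (p + 1) / (θ + 1) - Real.sqrt (p * θ * (p + 1) / (θ + 1)))) < p := by
  set z := p * θ * (p + 1) / (θ + 1) with hzdef
  have hθ : (0:ℝ) < θ + 1 := by linarith
  have hz : 16/9 < z := by
    rw [hzdef, lt_div_iff₀ hθ]
    have h1 : (0:ℝ) < θ - 4/3 := by linarith
    have h2 : (0:ℝ) < p - 4/3 := by linarith
    nlinarith [mul_pos h2 (mul_pos (show (0:ℝ) < θ by linarith) (show (0:ℝ) < p + 1 by linarith)), mul_pos h1 (show (0:ℝ) < θ by linarith)]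
  have hz0 : (0:ℝ) ≤ z := by linarith
  have hs : 4/3 < Real.sqrt z := by
    rw [show (4/3 : ℝ) = Real.sqrt ((4/3)^2) by
      rw [Real.sqrt_sq (by norm_num)]]
    exact Real.sqrt_lt_sqrt (by positivity) (by nlinarith)
  have hsq : Real.sqrt z ^ 2 = z := Real.sq_sqrt hz0
  have h1 : (Real.sqrt z - 2/3)^2 < z - Real.sqrt z := by nlinarith
  have h2 : Real.sqrt z - 2/3 < Real.sqrt (z - Real.sqrt z) := by
    rw [Real.lt_sqrt (by linarith)]
    exact h1
  linarith
end

section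
/- Let 1 < p ≤ θ and L(s) = s⁴ − (16pθ(p+1)/(θ+1)) s² + (16pθ(p+1)(p+θ+2)/(θ+1)²) s − 16pθ(p+1)²/(θ+1)². Then L has exactly one root in the interval (2, ∞). -/
set_option maxHeartbeats 1000000

theorem stmt_7 (p θ : ℝ) (hp : 1 < p) (hpθ : p ≤ θ)
    (L : ℝ → ℝ)
    (hL : ∀ s, L s = s ^ 4 - (16 * p * θ * (p + 1) / (θ + 1)) * s ^ 2 +
      (16 * p * θ * (p + 1) * (p + θ + 2) / (θ + 1) ^ 2) * s -
      16 * p * θ * (p + 1) ^ 2 / (θ + 1) ^ 2) :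
    ∃! s : ℝ, s ∈ Set.Ioi (2 : ℝ) ∧ L s = 0 := by
  have hθ1 : (1:ℝ) < θ := lt_of_lt_of_le hp hpθ
  have hp0 : (0:ℝ) < p := by linarith
  have hθ0 : (0:ℝ) < θ := by linarith
  have hθ1' : (0:ℝ) < θ + 1 := by linarith
  set A := 16 * p * θ * (p + 1) / (θ + 1) with hA
  set B := 16 * p * θ * (p + 1) * (p + θ + 2) / (θ + 1) ^ 2 with hB
  set C := 16 * p * θ * (p + 1) ^ 2 / (θ + 1) ^ 2 with hC
  have hq : (0:ℝ) < p * θ * (p + 1) := by positivity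
  have hq2 : (0:ℝ) < p + θ + 2 := by linarith
  have hA0 : 0 < A := by
    rw [hA]; apply div_pos; nlinarith; linarith
  have hB0 : 0 < B := by
    rw [hB]; apply div_pos; nlinarith [mul_pos hq hq2]; positivity
  have hC0 : 0 < C := by
    rw [hC]; apply div_pos; nlinarith [mul_pos hq (show (0:ℝ) < p + 1 by linarith)]; positivity
  have hLfun : L = fun s => s ^ 4 - A * s ^ 2 + B * s - C := funext hL
  set G : ℝ → ℝ := fun s => 4 * s ^ 3 - 2 * A * s + B with hG
  -- derivative of L
  have hderiv : ∀ x : ℝ, HasDerivAt L (G x) x := by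
    intro x
    rw [hLfun, hG]
    have h1 : HasDerivAt (fun s : ℝ => s ^ 4) (4 * x ^ 3) x := by
      simpa using hasDerivAt_pow 4 x
    have h2 : HasDerivAt (fun s : ℝ => A * s ^ 2) (A * (2 * x)) x := by
      simpa using (hasDerivAt_pow 2 x).const_mul A
    have h3 : HasDerivAt (fun s : ℝ => B * s) B x := by
      simpa using (hasDerivAt_id x).const_mul B
    have h := ((h1.sub h2).add h3).sub_const C
    exact h.congr_deriv (by simp only []; ring)
  -- second derivative of L / convexity of G
  have hG1 : deriv G = fun x => 12 * x ^ 2 - 2 * A := by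
    funext x
    have h : HasDerivAt G (12 * x ^ 2 - 2 * A) x := by
      rw [hG]
      have h1 : HasDerivAt (fun s : ℝ => 4 * s ^ 3) (4 * (3 * x ^ 2)) x := by
        simpa using (hasDerivAt_pow 3 x).const_mul 4
      have h2 : HasDerivAt (fun s : ℝ => 2 * A * s) (2 * A) x := by
        simpa using (hasDerivAt_id x).const_mul (2 * A)
      have h := (h1.sub h2).add_const B
      exact h.congr_deriv (by ring)
    exact h.deriv
  have hG2 : ∀ x : ℝ, deriv (deriv G) x = 24 * x := by
    intro x
    rw [hG1]
    have h : HasDerivAt (fun x : ℝ => 12 * x ^ 2 - 2 * A) (24 * x) x := by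
      have h1 : HasDerivAt (fun s : ℝ => 12 * s ^ 2) (12 * (2 * x)) x := by
        simpa using (hasDerivAt_pow 2 x).const_mul 12
      have h := h1.sub_const (2 * A)
      exact h.congr_deriv (by ring)
    exact h.deriv
  have hGcont : Continuous G := by rw [hG]; fun_prop
  have hconv : StrictConvexOn ℝ (Set.Ici (2:ℝ)) G := by
    apply strictConvexOn_of_deriv2_pos (convex_Ici 2) hGcont.continuousOn
    intro x hx
    rw [interior_Ici] at hx
    show 0 < deriv (deriv G) x
    rw [hG2 x]
    have : (2:ℝ) < x := hx
    linarith
  -- G 2 < 0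
  have hG2neg : G 2 < 0 := by
    have hGv : G 2 = 32 - 4 * A + B := by rw [hG]; ring
    have key : (32 - 4 * A + B) * (θ + 1) ^ 2
        = 32 * (θ + 1) ^ 2 - 64 * p * θ * (p + 1) * (θ + 1)
          + 16 * p * θ * (p + 1) * (p + θ + 2) := by
      rw [hA, hB]; field_simp; ring
    have hlt : (32 - 4 * A + B) * (θ + 1) ^ 2 < 0 := by
      rw [key]
      nlinarith [mul_pos hp0 hθ0, mul_pos (sub_pos.2 hp) (sub_pos.2 hθ1),
        mul_nonneg (mul_nonneg (mul_nonneg hp0.le hθ0.le) (by linarith : (0:ℝ) ≤ p + 1)) (sub_nonneg.2 hpθ),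
        mul_pos (mul_pos hp0 hθ0) (by linarith : (0:ℝ) < p + 1),
        mul_nonneg (mul_nonneg hθ0.le (by linarith : (0:ℝ) ≤ θ + 1)) (sub_pos.2 hp).le,
        mul_pos hθ0 (sub_pos.2 hθ1)]
    rw [hGv]
    by_contra h
    push_neg at h
    nlinarith [mul_nonneg h (sq_nonneg (θ + 1))]
  -- L 2 < 0
  have hL2 : L 2 < 0 := by
    have hLv : L 2 = 16 - 4 * A + 2 * B - C := by rw [hL 2]; ring
    have key : (16 - 4 * A + 2 * B - C) * (θ + 1) ^ 2
        = 16 * (θ + 1) ^ 2 - 64 * p * θ * (p + 1) * (θ + 1)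
          + 32 * p * θ * (p + 1) * (p + θ + 2) - 16 * p * θ * (p + 1) ^ 2 := by
      rw [hA, hB, hC]; field_simp; ring
    have hlt : (16 - 4 * A + 2 * B - C) * (θ + 1) ^ 2 < 0 := by
      rw [key]
      nlinarith [mul_pos hp0 hθ0, mul_pos (sub_pos.2 hp) (sub_pos.2 hθ1),
        mul_nonneg (mul_nonneg (mul_nonneg hp0.le hθ0.le) (by linarith : (0:ℝ) ≤ p + 1)) (sub_nonneg.2 hpθ),
        mul_pos (mul_pos hp0 hθ0) (by linarith : (0:ℝ) < p + 1),
        mul_nonneg (mul_nonneg hθ0.le (by linarith : (0:ℝ) ≤ θ + 1)) (sub_pos.2 hp).le,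
        mul_pos hθ0 (sub_pos.2 hθ1)]
    rw [hLv]
    by_contra h
    push_neg at h
    nlinarith [mul_nonneg h (sq_nonneg (θ + 1))]
  -- root t of G in (2, A+2)
  have hGNpos : 0 < G (A + 2) := by
    have : G (A + 2) = 4 * (A + 2) ^ 3 - 2 * A * (A + 2) + B := by rw [hG]
    rw [this]
    nlinarith [hA0, hB0, sq_nonneg A]
  obtain ⟨t, htmem, hGt⟩ := intermediate_value_Ioo (by linarith : (2:ℝ) ≤ A + 2)
    hGcont.continuousOn (Set.mem_Ioo.2 ⟨hG2neg, hGNpos⟩)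
  have ht2 : 2 < t := htmem.1
  -- sign of G
  have hGneg : ∀ x, 2 ≤ x → x < t → G x < 0 := by
    intro x hx2 hxt
    rcases eq_or_lt_of_le hx2 with h | h
    · rw [← h]; exact hG2neg
    · have ha : 0 < (t - x) / (t - 2) := div_pos (by linarith) (by linarith)
      have hb : 0 < (x - 2) / (t - 2) := div_pos (by linarith) (by linarith)
      have hne : t - 2 ≠ 0 := by linarith
      have hab : (t - x) / (t - 2) + (x - 2) / (t - 2) = 1 := by
        rw [← add_div, show t - x + (x - 2) = t - 2 from by ring, div_self hne]
      have h2m : (2:ℝ) ∈ Set.Ici (2:ℝ) := Set.self_mem_Ici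
      have htm : t ∈ Set.Ici (2:ℝ) := Set.mem_Ici.2 ht2.le
      have hmain := hconv.2 h2m htm (by linarith : (2:ℝ) ≠ t) ha hb hab
      simp only [smul_eq_mul] at hmain
      have hx' : (t - x) / (t - 2) * 2 + (x - 2) / (t - 2) * t = x := by
        field_simp
        ring
      rw [hx', hGt, mul_zero, add_zero] at hmain
      exact hmain.trans (mul_neg_of_pos_of_neg ha hG2neg)
  have hGpos : ∀ x, t < x → 0 < G x := by
    intro x hx
    have ha : 0 < (x - t) / (x - 2) := div_pos (by linarith) (by linarith)
    have hb : 0 < (t - 2) / (x - 2) := div_pos (by linarith) (by linarith)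
    have hne : x - 2 ≠ 0 := by linarith
    have hab : (x - t) / (x - 2) + (t - 2) / (x - 2) = 1 := by
      rw [← add_div, show x - t + (t - 2) = x - 2 from by ring, div_self hne]
    have h2m : (2:ℝ) ∈ Set.Ici (2:ℝ) := Set.self_mem_Ici
    have hxm : x ∈ Set.Ici (2:ℝ) := Set.mem_Ici.2 (by linarith)
    have hmain := hconv.2 h2m hxm (by linarith : (2:ℝ) ≠ x) ha hb hab
    simp only [smul_eq_mul] at hmain
    have hx' : (x - t) / (x - 2) * 2 + (t - 2) / (x - 2) * x = t := by
      field_simp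
      ring
    rw [hx', hGt] at hmain
    by_contra h
    push_neg at h
    nlinarith [mul_neg_of_pos_of_neg ha hG2neg, mul_nonneg hb.le (neg_nonneg.2 h)]
  -- monotonicity of L
  have hcontL : Continuous L := by rw [hLfun]; fun_prop
  have hanti : StrictAntiOn L (Set.Icc 2 t) := by
    apply strictAntiOn_of_deriv_neg (convex_Icc 2 t) hcontL.continuousOn
    intro x hx
    rw [interior_Icc] at hx
    rw [(hderiv x).deriv]
    exact hGneg x hx.1.le hx.2
  have hmono : StrictMonoOn L (Set.Ici t) := by
    apply strictMonoOn_of_deriv_pos (convex_Ici t) hcontL.continuousOn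
    intro x hx
    rw [interior_Ici] at hx
    rw [(hderiv x).deriv]
    exact hGpos x hx
  have hLt : L t < 0 := by
    have := hanti (Set.mem_Icc.2 ⟨le_refl 2, ht2.le⟩) (Set.mem_Icc.2 ⟨ht2.le, le_refl t⟩) ht2
    linarith
  -- large point where L > 0
  set M := max (t + 1) (1 + A + C) with hM
  have hMt : t < M := lt_of_lt_of_le (by linarith) (le_max_left _ _)
  have hM1 : 1 + A + C ≤ M := le_max_right _ _
  have hM1' : (1:ℝ) ≤ M := by linarith
  have hLM : 0 < L M := by
    rw [hL M]
    have e2 : M ≤ M ^ 2 := by nlinarith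
    have e3 : M ^ 2 ≤ M ^ 3 := by nlinarith
    have e1 : (1:ℝ) ≤ M ^ 3 := by nlinarith
    nlinarith [mul_pos hB0 (by linarith : (0:ℝ) < M),
      mul_nonneg hA0.le (sub_nonneg.2 e3),
      mul_nonneg hC0.le (sub_nonneg.2 e1),
      mul_le_mul_of_nonneg_right hM1 (by positivity : (0:ℝ) ≤ M ^ 3)]
  obtain ⟨s₀, hs₀mem, hLs₀⟩ := intermediate_value_Ioo hMt.le hcontL.continuousOn
    (Set.mem_Ioo.2 ⟨hLt, hLM⟩)
  refine ⟨s₀, ⟨Set.mem_Ioi.2 (by linarith [hs₀mem.1]), hLs₀⟩, ?_⟩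
  rintro s ⟨hs, hsz⟩
  have hs2 : 2 < s := hs
  by_cases hst : s ≤ t
  · exfalso
    have := hanti (Set.mem_Icc.2 ⟨le_refl 2, ht2.le⟩) (Set.mem_Icc.2 ⟨hs2.le, hst⟩) hs2
    rw [hsz] at this
    linarith
  · push_neg at hst
    exact hmono.injOn (Set.mem_Ici.2 hst.le) (Set.mem_Ici.2 (by linarith [hs₀mem.1]))
      (by rw [hsz, hLs₀])
end

section
/- Let 1 < p ≤ θ, z = pθ(p+1)/(θ+1), t₀⁺ = √z + √(z − √z), and L(s) = s⁴ − 16z s² + (16z(p+θ+2)/(θ+1)) s − 16z(p+1)/(θ+1). Then L(2t₀⁺) = (16pθ(p+1)(θ−p)/(θ+1)²)(1 − 2t₀⁺); in particular if p < θ then L(2t₀⁺) < 0. -/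
theorem stmt_8 (p θ : ℝ) (hp : 1 < p) (hpθ : p ≤ θ)
    (z t₀ : ℝ) (hz : z = p * θ * (p + 1) / (θ + 1))
    (ht : t₀ = Real.sqrt z + Real.sqrt (z - Real.sqrt z))
    (L : ℝ → ℝ)
    (hL : ∀ s, L s = s ^ 4 - 16 * z * s ^ 2 + (16 * z * (p + θ + 2) / (θ + 1)) * s -
      16 * z * (p + 1) / (θ + 1)) :
    L (2 * t₀) = (16 * p * θ * (p + 1) * (θ - p) / (θ + 1) ^ 2) * (1 - 2 * t₀) ∧
    (p < θ → L (2 * t₀) < 0) := by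
  have hθ1 : (0:ℝ) < θ + 1 := by linarith
  have hz1 : 1 < z := by
    rw [hz, lt_div_iff₀ hθ1]
    nlinarith [mul_pos (show (0:ℝ) < p - 1 by linarith) (show (0:ℝ) < θ by linarith),
      mul_pos (show (0:ℝ) < p by linarith) (show (0:ℝ) < θ by linarith)]
  set a := Real.sqrt z with ha
  have ha0 : 0 ≤ a := Real.sqrt_nonneg z
  have ha2 : a ^ 2 = z := Real.sq_sqrt (by linarith)
  have ha1 : 1 < a := by nlinarith
  have hza : 0 ≤ z - a := by nlinarith
  set b := Real.sqrt (z - a) with hb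
  have hb0 : 0 ≤ b := Real.sqrt_nonneg _
  have hb2 : b ^ 2 = z - a := Real.sq_sqrt hza
  have h1 : t₀ ^ 2 = 2 * a * t₀ - a := by
    rw [ht]; linear_combination hb2 - ha2
  have h2 : t₀ ^ 4 = 8 * z * a * t₀ - 4 * z * a - 4 * z * t₀ + z := by
    linear_combination (t₀ ^ 2 + 2 * a * t₀ - a + 4 * z) * h1 +
      (4 * t₀ ^ 2 - 4 * t₀ + 1) * ha2
  have hmain : L (2 * t₀) = 16 * z - 64 * z * t₀ + 32 * z * (p + θ + 2) / (θ + 1) * t₀ -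
      16 * z * (p + 1) / (θ + 1) := by
    rw [hL]
    linear_combination 16 * h2 - 64 * z * h1
  have ht1 : 1 < t₀ := by
    rw [ht]; nlinarith
  have heq : L (2 * t₀) = (16 * p * θ * (p + 1) * (θ - p) / (θ + 1) ^ 2) * (1 - 2 * t₀) := by
    rw [hmain, hz]
    field_simp
    ring
  refine ⟨heq, fun hlt => ?_⟩
  rw [heq]
  apply mul_neg_of_pos_of_neg
  · apply div_pos
    · have h1 : (0:ℝ) < p := by linarith
      have h2 : (0:ℝ) < θ := by linarith
      have h3 : (0:ℝ) < p + 1 := by linarith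
      have h4 : (0:ℝ) < θ - p := by linarith
      positivity
    · positivity
  · linarith
end

section
/- Let 4/3 < p ≤ θ and L(s) = s⁴ − (16pθ(p+1)/(θ+1)) s² + (16pθ(p+1)(p+θ+2)/(θ+1)²) s − 16pθ(p+1)²/(θ+1)². Then L(p) < 0. -/
theorem stmt_10 (p θ : ℝ) (hp : 4 / 3 < p) (hpθ : p ≤ θ)
    (L : ℝ → ℝ)
    (hL : ∀ s, L s = s ^ 4 - (16 * p * θ * (p + 1) / (θ + 1)) * s ^ 2 +
      (16 * p * θ * (p + 1) * (p + θ + 2) / (θ + 1) ^ 2) * s -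
      16 * p * θ * (p + 1) ^ 2 / (θ + 1) ^ 2) :
    L p < 0 := by
  have ht : (0:ℝ) < θ + 1 := by linarith
  have hp0 : (0:ℝ) < p := by linarith
  have heq : L p = (p ^ 4 * (θ + 1) ^ 2 - 16 * p * θ * (p + 1) *
      (p ^ 2 * (θ + 1) - p * (p + θ + 2) + (p + 1))) / (θ + 1) ^ 2 := by
    rw [hL]; field_simp; ring
  rw [heq]
  apply div_neg_of_neg_of_pos _ (by positivity)
  have hθp : 0 ≤ θ - p := by linarith
  have hA : 16 * p ^ 2 * (θ + 1) ≤ 16 * p * θ * (p + 1) := by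
    nlinarith [mul_nonneg hp0.le hθp]
  have hQ : (p - 1) ^ 2 * (θ + 1) ≤ p ^ 2 * (θ + 1) - p * (p + θ + 2) + (p + 1) := by
    nlinarith [mul_nonneg (by linarith : (0:ℝ) ≤ p - 1) hθp]
  have hQ0 : 0 ≤ (p - 1) ^ 2 * (θ + 1) := by positivity
  have hA0 : 0 ≤ 16 * p ^ 2 * (θ + 1) := by positivity
  have hmul : 16 * p ^ 2 * (θ + 1) * ((p - 1) ^ 2 * (θ + 1)) ≤
      16 * p * θ * (p + 1) * (p ^ 2 * (θ + 1) - p * (p + θ + 2) + (p + 1)) :=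
    mul_le_mul hA hQ hQ0 (le_trans hA0 hA)
  have hfin0 : p ^ 4 - 16 * p ^ 2 * (p - 1) ^ 2 < 0 := by
    nlinarith [mul_pos hp0 hp0, mul_pos (mul_pos hp0 hp0)
      (mul_pos (by linarith : (0:ℝ) < 5 * p - 4) (by linarith : (0:ℝ) < 3 * p - 4))]
  have hfin : (θ + 1) ^ 2 * (p ^ 4 - 16 * p ^ 2 * (p - 1) ^ 2) < 0 :=
    mul_neg_of_pos_of_neg (by positivity) hfin0
  nlinarith [hmul, hfin]
end

section
/- For all real 1 < p ≤ θ, the quantity 2t₀⁺(θ+1)/(pθ−1) > 4, where t₀⁺ = √z + √(z − √z) and z = pθ(p+1)/(θ+1). -/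
lemma key_poly (p θ : ℝ) (hp : 1 < p) (hpθ : p ≤ θ)
    (hc : p*θ*(p+1)*(θ+1) < 4*(p*θ-1)^2) :
    16*(p*θ-1)^4 < p*θ*(p+1)*(θ+1)*(4*p*θ-θ-5)^2 := by
  nlinarith [sq_nonneg (θ-p), sq_nonneg (p*θ-1), mul_pos (sub_pos.2 hp) (sub_pos.2 (lt_of_lt_of_le hp hpθ)), sq_nonneg (p*θ-θ), sq_nonneg (4*p*θ-θ-5), mul_pos (mul_pos (by linarith : (0:ℝ)<p) (by linarith : (0:ℝ)<θ)) (by linarith : (0:ℝ)<θ+1), sq_nonneg ((p*θ-1)*(θ-p)), sq_nonneg ((p*θ-1)*(p-1))]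

theorem stmt_14 (p θ : ℝ) (hp : 1 < p) (hpθ : p ≤ θ)
    (z : ℝ) (hz : z = p * θ * (p + 1) / (θ + 1)) :
    4 < 2 * (Real.sqrt z + Real.sqrt (z - Real.sqrt z)) * (θ + 1) / (p * θ - 1) := by
  have hθ : 1 < θ := lt_of_lt_of_le hp hpθ
  have hθ1 : (0:ℝ) < θ + 1 := by linarith
  have hu : 1 < p * θ := by nlinarith
  have hden : 0 < p * θ - 1 := by linarith
  have hzp : p ^ 2 ≤ z := by
    rw [hz, le_div_iff₀ hθ1]; nlinarith
  have hz1 : 1 < z := by nlinarith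
  have hz0 : 0 ≤ z := by linarith
  set A := Real.sqrt z with hA
  have hA1 : 1 < A := by
    rw [hA, show (1:ℝ) = Real.sqrt 1 by simp]
    exact Real.sqrt_lt_sqrt (by norm_num) hz1
  have hA0 : 0 < A := by linarith
  have hAA : A * A = z := Real.mul_self_sqrt hz0
  have hzA : A < z := by nlinarith
  set R := 2 * (p * θ - 1) / (θ + 1) with hR
  have hR0 : 0 < R := by positivity
  -- main claim: R < A + sqrt (z - A)
  have hmain : R < A + Real.sqrt (z - A) := by
    rcases le_or_gt R A with h | h
    · have : 0 < Real.sqrt (z - A) := Real.sqrt_pos.2 (by linarith)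
      linarith
    · -- A < R; show sqrt (z - A) > R - A
      have hR1 : 1 < R := by linarith
      have hm0 : 0 < 2 * R - 1 := by linarith
      have hc : p*θ*(p+1)*(θ+1) < 4*(p*θ-1)^2 := by
        have hzR : z < R ^ 2 := by nlinarith
        rw [hz, hR, div_pow, div_lt_div_iff₀ hθ1 (by positivity)] at hzR
        nlinarith [hzR]
      have hk := key_poly p θ hp hpθ hc
      have hzy : z * (θ + 1) = p * θ * (p + 1) := by
        rw [hz]; field_simp
      have hRy : R * (θ + 1) = 2 * (p * θ - 1) := by
        rw [hR]; field_simp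
      have hmy : (2 * R - 1) * (θ + 1) = 4 * p * θ - θ - 5 := by
        linear_combination 2 * hRy
      have h4 : R ^ 4 < z * (2 * R - 1) ^ 2 := by
        have hy4 : (0:ℝ) < (θ + 1) ^ 4 := by positivity
        have h44 : R ^ 4 * (θ + 1) ^ 4 < z * (2 * R - 1) ^ 2 * (θ + 1) ^ 4 := by
          calc R ^ 4 * (θ + 1) ^ 4 = (R * (θ + 1)) ^ 4 := by ring
            _ = 16 * (p * θ - 1) ^ 4 := by rw [hRy]; ring
            _ < p * θ * (p + 1) * (θ + 1) * (4 * p * θ - θ - 5) ^ 2 := hk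
            _ = (z * (θ + 1)) * (θ + 1) * ((2 * R - 1) * (θ + 1)) ^ 2 := by
                rw [hzy, hmy]
            _ = z * (2 * R - 1) ^ 2 * (θ + 1) ^ 4 := by ring
        exact (mul_lt_mul_iff_left₀ hy4).mp h44
      have h5 : R ^ 2 / (2 * R - 1) < A := by
        rw [hA]
        refine (Real.lt_sqrt (by positivity)).2 ?_
        rw [div_pow, div_lt_iff₀ (by positivity)]
        calc (R^2)^2 = R^4 := by ring
          _ < z * (2*R-1)^2 := h4
      have h6 : R ^ 2 < A * (2 * R - 1) := by
        rw [div_lt_iff₀ hm0] at h5; linarith [h5]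
      have h7 : R - A < Real.sqrt (z - A) := by
        refine (Real.lt_sqrt (by linarith)).2 ?_
        nlinarith [hAA, h6]
      linarith
  have h2 : R * (θ + 1) = 2 * (p * θ - 1) := by
    rw [hR]; field_simp
  rw [lt_div_iff₀ hden]
  nlinarith [mul_lt_mul_of_pos_right hmain hθ1, h2]
end
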